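/- arXiv:math-ph/0610019 — 3 statements merged into one kernel-verified Lean document; each statement's English description precedes it below -/
import Mathlib

section
/- Let H be a complex Hilbert space, N and M positive integers, and (π_k)_{k=1,...,N}, (τ_j)_{j=1,...,M} bounded operators on H with ∑_k π_k π_k* = Id and ∑_j τ_j τ_j* = Id. Let U : H → H be a bounded operator, and define T : H^N → H^M by the operator matrix T_{jk} = τ_j* ∘ U ∘ π_k. Then the operator norm of T from the Hilbert space H^N (with the direct-sum norm) to H^M equals the operator norm of U on H. -/
open ContinuousLinearMap in
private lemma sum_norm_adjoint_sq
    {H : Type*} [NormedAddCommGroup H] [InnerProductSpace ℂ H] [CompleteSpace H]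
    {n : ℕ} (σ : Fin n → H →L[ℂ] H)
    (hσ : ∑ k, σ k ∘L (σ k).adjoint = (1 : H →L[ℂ] H)) (x : H) :
    ∑ k, ‖(σ k).adjoint x‖ ^ 2 = ‖x‖ ^ 2 := by
  have h : ∀ k : Fin n, ‖(σ k).adjoint x‖ ^ 2
      = RCLike.re (inner (𝕜 := ℂ) x ((σ k ∘L (σ k).adjoint) x)) := by
    intro k
    rw [← inner_self_eq_norm_sq (𝕜 := ℂ)]
    congr 1
    simpa using ContinuousLinearMap.adjoint_inner_left (σ k) ((σ k).adjoint x) x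
  simp_rw [h]
  rw [← map_sum, ← inner_sum, ← ContinuousLinearMap.sum_apply, hσ]
  simpa using inner_self_eq_norm_sq (𝕜 := ℂ) x

theorem matrix_operator_norm_eq
    {H : Type*} [NormedAddCommGroup H] [InnerProductSpace ℂ H] [CompleteSpace H]
    (N M : ℕ) (hN : 0 < N) (hM : 0 < M)
    (π : Fin N → H →L[ℂ] H) (τ : Fin M → H →L[ℂ] H)
    (hπ : ∑ k, π k ∘L (π k).adjoint = (1 : H →L[ℂ] H))
    (hτ : ∑ j, τ j ∘L (τ j).adjoint = (1 : H →L[ℂ] H))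
    (U : H →L[ℂ] H)
    (T : PiLp 2 (fun _ : Fin N => H) →L[ℂ] PiLp 2 (fun _ : Fin M => H))
    (hT : ∀ (Ψ : PiLp 2 (fun _ : Fin N => H)) (j : Fin M),
      T Ψ j = ∑ k, (τ j).adjoint (U (π k (Ψ k)))) :
    ‖T‖ = ‖U‖ := by
  -- Lemma B: ‖∑ π k (Ψ k)‖ ≤ ‖Ψ‖
  have lemB : ∀ Ψ : PiLp 2 (fun _ : Fin N => H), ‖∑ k, π k (Ψ k)‖ ≤ ‖Ψ‖ := by
    intro Ψ
    set v : H := ∑ k, π k (Ψ k) with hv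
    rcases eq_or_ne v 0 with h0 | h0
    · simp [h0]
    have hvpos : 0 < ‖v‖ := norm_pos_iff.mpr h0
    have key : ‖v‖ ^ 2 ≤ ‖Ψ‖ * ‖v‖ := by
      have h1 : ‖v‖ ^ 2 = ∑ k, RCLike.re (inner (𝕜 := ℂ) (Ψ k) ((π k).adjoint v)) := by
        rw [← inner_self_eq_norm_sq (𝕜 := ℂ) v]
        conv_lhs => rw [hv, sum_inner]
        rw [map_sum]
        congr 1; ext k
        congr 1
        exact (ContinuousLinearMap.adjoint_inner_right (π k) (Ψ k) v).symm
      have h2 : ∑ k, RCLike.re (inner (𝕜 := ℂ) (Ψ k) ((π k).adjoint v))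
          ≤ ∑ k, ‖Ψ k‖ * ‖(π k).adjoint v‖ :=
        Finset.sum_le_sum fun k _ => re_inner_le_norm _ _
      have h3 : (∑ k, ‖Ψ k‖ * ‖(π k).adjoint v‖) ^ 2
          ≤ (∑ k, ‖Ψ k‖ ^ 2) * ∑ k, ‖(π k).adjoint v‖ ^ 2 :=
        Finset.sum_mul_sq_le_sq_mul_sq _ _ _
      have h4 : (∑ k, ‖Ψ k‖ ^ 2) * ∑ k, ‖(π k).adjoint v‖ ^ 2 = (‖Ψ‖ * ‖v‖) ^ 2 := by
        rw [sum_norm_adjoint_sq π hπ v, ← PiLp.norm_sq_eq_of_L2, mul_pow]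
      have h5 : ∑ k, ‖Ψ k‖ * ‖(π k).adjoint v‖ ≤ ‖Ψ‖ * ‖v‖ := by
        have hnn : 0 ≤ ∑ k, ‖Ψ k‖ * ‖(π k).adjoint v‖ :=
          Finset.sum_nonneg fun k _ => mul_nonneg (norm_nonneg _) (norm_nonneg _)
        nlinarith [mul_nonneg (norm_nonneg Ψ) (norm_nonneg v)]
      calc ‖v‖ ^ 2 = ∑ k, RCLike.re (inner (𝕜 := ℂ) (Ψ k) ((π k).adjoint v)) := h1
        _ ≤ ∑ k, ‖Ψ k‖ * ‖(π k).adjoint v‖ := h2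
        _ ≤ ‖Ψ‖ * ‖v‖ := h5
    nlinarith [key, hvpos]
  apply le_antisymm
  · apply ContinuousLinearMap.opNorm_le_bound _ (norm_nonneg U)
    intro Ψ
    set v : H := ∑ k, π k (Ψ k) with hv
    have hTv : ∀ j, T Ψ j = (τ j).adjoint (U v) := by
      intro j
      rw [hT, hv, map_sum, map_sum]
    have h2 : ‖T Ψ‖ ^ 2 = ‖U v‖ ^ 2 := by
      rw [PiLp.norm_sq_eq_of_L2]
      simp_rw [hTv]
      exact sum_norm_adjoint_sq τ hτ (U v)
    have h3 : ‖T Ψ‖ = ‖U v‖ := by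
      have := congrArg Real.sqrt h2
      rwa [Real.sqrt_sq (norm_nonneg _), Real.sqrt_sq (norm_nonneg _)] at this
    calc ‖T Ψ‖ = ‖U v‖ := h3
      _ ≤ ‖U‖ * ‖v‖ := U.le_opNorm v
      _ ≤ ‖U‖ * ‖Ψ‖ := by
          exact mul_le_mul_of_nonneg_left (lemB Ψ) (norm_nonneg U)
  · apply ContinuousLinearMap.opNorm_le_bound _ (norm_nonneg T)
    intro x
    set Ψ : PiLp 2 (fun _ : Fin N => H) := WithLp.toLp 2 (fun k => (π k).adjoint x) with hΨ
    have hΨnorm : ‖Ψ‖ = ‖x‖ := by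
      have h2 : ‖Ψ‖ ^ 2 = ‖x‖ ^ 2 := by
        rw [PiLp.norm_sq_eq_of_L2]
        exact sum_norm_adjoint_sq π hπ x
      have := congrArg Real.sqrt h2
      rwa [Real.sqrt_sq (norm_nonneg _), Real.sqrt_sq (norm_nonneg _)] at this
    have hvx : ∑ k, π k (Ψ k) = x := by
      have := congrArg (fun (A : H →L[ℂ] H) => A x) hπ
      simpa [ContinuousLinearMap.sum_apply] using this
    have hTj : ∀ j, T Ψ j = (τ j).adjoint (U x) := by
      intro j
      rw [hT, ← map_sum, ← map_sum, hvx]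
    have h2 : ‖T Ψ‖ ^ 2 = ‖U x‖ ^ 2 := by
      rw [PiLp.norm_sq_eq_of_L2]
      simp_rw [hTj]
      exact sum_norm_adjoint_sq τ hτ (U x)
    have h3 : ‖T Ψ‖ = ‖U x‖ := by
      have := congrArg Real.sqrt h2
      rwa [Real.sqrt_sq (norm_nonneg _), Real.sqrt_sq (norm_nonneg _)] at this
    calc ‖U x‖ = ‖T Ψ‖ := h3.symm
      _ ≤ ‖T‖ * ‖Ψ‖ := T.le_opNorm Ψ
      _ = ‖T‖ * ‖x‖ := by rw [hΨnorm]
end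

section
/- Let H be a complex Hilbert space with a quantum partition of unity (π_k)_{k=1,...,N} (∑_k π_k π_k* = Id), an isometry U on H, a bounded operator O on H, positive weights (α_k), (β_j) with A = max_k α_k and B = max_j β_j, and set c = max_{j,k} α_k β_j ‖π_j* U π_k O‖. Let ε ≥ 0, and let ψ ∈ H be a unit vector such that ‖(Id − O) π_k* ψ‖ ≤ ε for all k. Define the pressures p_α(ψ) = −∑_k ‖π_k* ψ‖² log ‖π_k* ψ‖² − ∑_k ‖π_k* ψ‖² log α_k², and similarly p_β(Uψ) with weights β and the vectors π_j* U ψ. Then p_β(Uψ) + p_α(ψ) ≥ −2 log(c + N·A·B·ε). -/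
private lemma aux_sum_adjoint_sq {H : Type*} [NormedAddCommGroup H] [InnerProductSpace ℂ H]
    [CompleteSpace H] {N : ℕ} (π : Fin N → H →L[ℂ] H)
    (hπ : ∑ k, π k ∘L (π k).adjoint = (1 : H →L[ℂ] H)) (x : H) :
    ∑ k, ‖(π k).adjoint x‖ ^ 2 = ‖x‖ ^ 2 := by
  have h1 : (∑ k, (π k) ((π k).adjoint x)) = x := by
    have := congrFun (congrArg DFunLike.coe hπ) x
    simpa using this
  have h2 : (∑ k, (inner ℂ ((π k).adjoint x) ((π k).adjoint x) : ℂ)) = inner ℂ x x := by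
    calc (∑ k, (inner ℂ ((π k).adjoint x) ((π k).adjoint x) : ℂ))
        = ∑ k, (inner ℂ x ((π k) ((π k).adjoint x)) : ℂ) := by
          refine Finset.sum_congr rfl fun k _ => ?_
          rw [ContinuousLinearMap.adjoint_inner_left]
      _ = inner ℂ x (∑ k, (π k) ((π k).adjoint x)) := by rw [inner_sum]
      _ = inner ℂ x x := by rw [h1]
  have h3 : ∀ y : H, (inner ℂ y y : ℂ) = ((‖y‖ ^ 2 : ℝ) : ℂ) := fun y => by
    rw [inner_self_eq_norm_sq_to_K]; norm_cast
  simp only [h3] at h2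
  exact_mod_cast h2

private lemma aux_norm_sum_pi {H : Type*} [NormedAddCommGroup H] [InnerProductSpace ℂ H]
    [CompleteSpace H] {N : ℕ} (π : Fin N → H →L[ℂ] H)
    (hadj : ∀ x : H, ∑ k, ‖(π k).adjoint x‖ ^ 2 = ‖x‖ ^ 2)
    (S : Finset (Fin N)) (x : Fin N → H) :
    ‖∑ k ∈ S, (π k) (x k)‖ ^ 2 ≤ ∑ k ∈ S, ‖x k‖ ^ 2 := by
  set v := ∑ k ∈ S, (π k) (x k) with hv
  have hxs : (0:ℝ) ≤ ∑ k ∈ S, ‖x k‖ ^ 2 := Finset.sum_nonneg fun k _ => sq_nonneg _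
  have key : ‖v‖ ^ 2 ≤ Real.sqrt (∑ k ∈ S, ‖x k‖ ^ 2) * ‖v‖ := by
    have h1 : (‖v‖ ^ 2 : ℝ) = Complex.re (inner ℂ v v) := by
      rw [inner_self_eq_norm_sq_to_K]; norm_cast
    have h2 : (inner ℂ v v : ℂ) = ∑ k ∈ S, (inner ℂ (x k) ((π k).adjoint v) : ℂ) := by
      rw [hv, sum_inner]
      refine Finset.sum_congr rfl fun k _ => ?_
      rw [ContinuousLinearMap.adjoint_inner_right]
    have h3 : ‖v‖ ^ 2 ≤ ∑ k ∈ S, ‖x k‖ * ‖(π k).adjoint v‖ := by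
      rw [h1, h2, Complex.re_sum]
      refine Finset.sum_le_sum fun k _ => ?_
      calc Complex.re (inner ℂ (x k) ((π k).adjoint v) : ℂ)
          ≤ ‖(inner ℂ (x k) ((π k).adjoint v) : ℂ)‖ := Complex.re_le_norm _
        _ ≤ ‖x k‖ * ‖(π k).adjoint v‖ := norm_inner_le_norm _ _
    refine h3.trans ?_
    refine (Real.sum_mul_le_sqrt_mul_sqrt S _ _).trans ?_
    gcongr
    have h4 : ∑ k ∈ S, ‖(π k).adjoint v‖ ^ 2 ≤ ‖v‖ ^ 2 := by
      calc ∑ k ∈ S, ‖(π k).adjoint v‖ ^ 2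
          ≤ ∑ k, ‖(π k).adjoint v‖ ^ 2 :=
            Finset.sum_le_sum_of_subset_of_nonneg (Finset.subset_univ S)
              (fun k _ _ => sq_nonneg _)
        _ = ‖v‖ ^ 2 := hadj v
    calc Real.sqrt (∑ k ∈ S, ‖(π k).adjoint v‖ ^ 2)
        ≤ Real.sqrt (‖v‖ ^ 2) := Real.sqrt_le_sqrt h4
      _ = ‖v‖ := Real.sqrt_sq (norm_nonneg v)
  have hv2 : ‖v‖ ≤ Real.sqrt (∑ k ∈ S, ‖x k‖ ^ 2) := by
    rcases eq_or_lt_of_le (norm_nonneg v) with h0 | h0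
    · rw [← h0]; positivity
    · have key' : ‖v‖ * ‖v‖ ≤ Real.sqrt (∑ k ∈ S, ‖x k‖ ^ 2) * ‖v‖ := by
        rw [← pow_two]; exact key
      exact le_of_mul_le_mul_right key' h0
  calc ‖v‖ ^ 2 ≤ Real.sqrt (∑ k ∈ S, ‖x k‖ ^ 2) ^ 2 := by gcongr
    _ = ∑ k ∈ S, ‖x k‖ ^ 2 := Real.sq_sqrt hxs

set_option maxHeartbeats 1000000 in
theorem weighted_entropic_uncertainty_principle
    {H : Type*} [NormedAddCommGroup H] [InnerProductSpace ℂ H] [CompleteSpace H]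
    (N : ℕ) [NeZero N] (π : Fin N → H →L[ℂ] H)
    (hπ : ∑ k, π k ∘L (π k).adjoint = (1 : H →L[ℂ] H))
    (U : H →ₗᵢ[ℂ] H) (O : H →L[ℂ] H)
    (α β : Fin N → ℝ) (hα : ∀ k, 0 < α k) (hβ : ∀ j, 0 < β j)
    (A B c ε : ℝ)
    (hA : A = Finset.univ.sup' Finset.univ_nonempty α)
    (hB : B = Finset.univ.sup' Finset.univ_nonempty β)
    (hc : c = Finset.univ.sup' Finset.univ_nonempty
      (fun jk : Fin N × Fin N =>
        α jk.2 * β jk.1 *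
          ‖(π jk.1).adjoint ∘L (U.toContinuousLinearMap ∘L (π jk.2 ∘L O))‖))
    (hε : 0 ≤ ε) (ψ : H) (hψ : ‖ψ‖ = 1)
    (hloc : ∀ k, ‖(π k).adjoint ψ - O ((π k).adjoint ψ)‖ ≤ ε) :
    ((-∑ j, ‖(π j).adjoint (U ψ)‖ ^ 2 * Real.log (‖(π j).adjoint (U ψ)‖ ^ 2))
        - ∑ j, ‖(π j).adjoint (U ψ)‖ ^ 2 * Real.log ((β j) ^ 2))
      + ((-∑ k, ‖(π k).adjoint ψ‖ ^ 2 * Real.log (‖(π k).adjoint ψ‖ ^ 2))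
        - ∑ k, ‖(π k).adjoint ψ‖ ^ 2 * Real.log ((α k) ^ 2))
      ≥ -2 * Real.log (c + N * A * B * ε) := by
  classical
  -- basic abbreviations
  set u : Fin N → H := fun k => (π k).adjoint ψ with hu
  set v : Fin N → H := fun j => (π j).adjoint (U ψ) with hvdef
  set p : Fin N → ℝ := fun k => ‖u k‖ ^ 2 with hp
  set q : Fin N → ℝ := fun j => ‖v j‖ ^ 2 with hq
  set r : Fin N → ℝ := fun j => β j ^ 2 * q j with hr
  set s : Fin N → ℝ := fun k => α k ^ 2 * p k with hs
  set CC : ℝ := c + N * A * B * ε with hCC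
  set J : Finset (Fin N) := Finset.univ.filter (fun j => q j ≠ 0) with hJ
  set K : Finset (Fin N) := Finset.univ.filter (fun k => p k ≠ 0) with hK
  -- operator abbreviations
  set M : Fin N → Fin N → (H →L[ℂ] H) :=
    fun j k => (π j).adjoint ∘L (U.toContinuousLinearMap ∘L π k) with hM
  set T : Fin N → Fin N → (H →L[ℂ] H) :=
    fun j k => (π j).adjoint ∘L (U.toContinuousLinearMap ∘L (π k ∘L O)) with hT
  set cjk : Fin N → Fin N → ℂ := fun j k => inner ℂ (v j) (M j k (u k)) with hcjk
  -- elementary facts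
  have hadj : ∀ x : H, ∑ k, ‖(π k).adjoint x‖ ^ 2 = ‖x‖ ^ 2 := aux_sum_adjoint_sq π hπ
  have hL2 : ∀ (S : Finset (Fin N)) (x : Fin N → H),
      ‖∑ k ∈ S, (π k) (x k)‖ ^ 2 ≤ ∑ k ∈ S, ‖x k‖ ^ 2 := aux_norm_sum_pi π hadj
  have hUψ : ‖U ψ‖ = 1 := by rw [U.norm_map]; exact hψ
  have hp1 : ∑ k, p k = 1 := by
    simpa [hp, hψ] using hadj ψ
  have hq1 : ∑ j, q j = 1 := by
    simpa [hq, hUψ] using hadj (U ψ)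
  have hpnn : ∀ k, 0 ≤ p k := fun k => sq_nonneg _
  have hqnn : ∀ j, 0 ≤ q j := fun j => sq_nonneg _
  have hple : ∀ k, p k ≤ 1 := by
    intro k
    rw [← hp1]
    exact Finset.single_le_sum (fun i _ => hpnn i) (Finset.mem_univ k)
  have hqle : ∀ j, q j ≤ 1 := by
    intro j
    rw [← hq1]
    exact Finset.single_le_sum (fun i _ => hqnn i) (Finset.mem_univ j)
  have hukle : ∀ k, ‖u k‖ ≤ 1 := by
    intro k
    have h2 : ‖u k‖ ^ 2 ≤ 1 := hple k
    nlinarith [norm_nonneg (u k)]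
  have hπadj_le : ∀ k (x : H), ‖(π k).adjoint x‖ ≤ ‖x‖ := by
    intro k x
    have h1 : ‖(π k).adjoint x‖ ^ 2 ≤ ‖x‖ ^ 2 := by
      rw [← hadj x]
      exact Finset.single_le_sum (fun i _ => sq_nonneg ‖(π i).adjoint x‖) (Finset.mem_univ k)
    nlinarith [norm_nonneg ((π k).adjoint x), norm_nonneg x]
  have hπ_le : ∀ k (x : H), ‖(π k) x‖ ≤ ‖x‖ := by
    intro k x
    have hn : ‖π k‖ ≤ 1 := by
      have h1 : ‖(π k).adjoint‖ ≤ 1 :=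
        ContinuousLinearMap.opNorm_le_bound _ zero_le_one (fun x => by
          simpa using hπadj_le k x)
      calc ‖π k‖ = ‖(π k).adjoint‖ :=
        (LinearIsometryEquiv.norm_map ContinuousLinearMap.adjoint (π k)).symm
        _ ≤ 1 := h1
    calc ‖(π k) x‖ ≤ ‖π k‖ * ‖x‖ := (π k).le_opNorm x
      _ ≤ 1 * ‖x‖ := by gcongr
      _ = ‖x‖ := one_mul _
  -- sup bounds
  have hAk : ∀ k, α k ≤ A := fun k => hA ▸ Finset.le_sup' α (Finset.mem_univ k)
  have hBj : ∀ j, β j ≤ B := fun j => hB ▸ Finset.le_sup' β (Finset.mem_univ j)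
  have hApos : 0 < A := lt_of_lt_of_le (hα ⟨0, Nat.pos_of_ne_zero (NeZero.ne N)⟩)
    (hAk _)
  have hBpos : 0 < B := lt_of_lt_of_le (hβ ⟨0, Nat.pos_of_ne_zero (NeZero.ne N)⟩)
    (hBj _)
  have hcjk_le : ∀ j k, α k * β j * ‖T j k‖ ≤ c := by
    intro j k
    rw [hc]
    exact Finset.le_sup' (f := fun jk : Fin N × Fin N =>
      α jk.2 * β jk.1 *
        ‖(π jk.1).adjoint ∘L (U.toContinuousLinearMap ∘L (π jk.2 ∘L O))‖)
      (Finset.mem_univ (j, k))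
  have hcnn : 0 ≤ c :=
    le_trans (mul_nonneg (mul_nonneg (hα 0).le (hβ 0).le) (norm_nonneg _)) (hcjk_le 0 0)
  -- bound on the matrix elements
  have hMapply : ∀ j k (x : H), M j k x = (π j).adjoint (U ((π k) x)) := by
    intro j k x
    simp [hM, ContinuousLinearMap.comp_apply]
  have hTapply : ∀ j k (x : H), T j k x = (π j).adjoint (U ((π k) (O x))) := by
    intro j k x
    simp [hT, ContinuousLinearMap.comp_apply]
  have hcb : ∀ j k, ‖cjk j k‖ ≤ ‖v j‖ * (‖T j k‖ * ‖u k‖ + ε) := by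
    intro j k
    have hsplit : M j k (u k) = T j k (u k) + M j k (u k - O (u k)) := by
      simp only [map_sub, hTapply, hMapply]
      abel
    have h1 : ‖cjk j k‖ ≤ ‖v j‖ * ‖T j k (u k)‖ + ‖v j‖ * ‖M j k (u k - O (u k))‖ := by
      have : cjk j k = inner ℂ (v j) (T j k (u k)) + inner ℂ (v j) (M j k (u k - O (u k))) := by
        rw [hcjk]
        simp only []
        rw [hsplit, inner_add_right]
      rw [this]
      refine (norm_add_le _ _).trans ?_
      gcongr <;> exact norm_inner_le_norm _ _
    refine h1.trans ?_
    rw [mul_add]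
    gcongr
    · exact (T j k).le_opNorm (u k)
    · calc ‖M j k (u k - O (u k))‖ = ‖(π j).adjoint (U ((π k) (u k - O (u k))))‖ := by
            rw [hMapply]
        _ ≤ ‖U ((π k) (u k - O (u k)))‖ := hπadj_le _ _
        _ = ‖(π k) (u k - O (u k))‖ := U.norm_map _
        _ ≤ ‖u k - O (u k)‖ := hπ_le _ _
        _ ≤ ε := hloc k
  -- recombination
  have hrecomb_full : ∑ k, (π k) (u k) = ψ := by
    have := congrFun (congrArg DFunLike.coe hπ) ψ
    simpa using this
  have hrecombK : ∑ k ∈ K, (π k) (u k) = ψ := by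
    rw [← hrecomb_full]
    apply Finset.sum_subset (Finset.subset_univ K)

    intro k _ hk
    rw [hK] at hk
    simp only [Finset.mem_filter, Finset.mem_univ, true_and, not_not] at hk
    have : u k = 0 := by
      rw [hp] at hk
      simpa using hk
    rw [this, map_zero]
  -- sum of matrix elements over all indices equals 1
  have hsumc : ∀ (S : Finset (Fin N)) (w : Fin N → ℂ),
      ∀ j, ∑ k ∈ S, w k * cjk j k
        = inner ℂ (v j) ((π j).adjoint (U (∑ k ∈ S, w k • (π k) (u k)))) := by
    intro S w j
    have h1 : (π j).adjoint (U (∑ k ∈ S, w k • (π k) (u k)))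
        = ∑ k ∈ S, w k • M j k (u k) := by
      rw [map_sum, map_sum]
      refine Finset.sum_congr rfl fun k _ => ?_
      rw [map_smul, map_smul, hMapply]
    rw [h1, inner_sum]
    refine Finset.sum_congr rfl fun k _ => ?_
    rw [inner_smul_right]
  have hCpos : 0 < CC := by
    by_contra hCp
    push_neg at hCp
    have hNpos : (0:ℝ) < (N:ℝ) := by
      exact_mod_cast Nat.pos_of_ne_zero (NeZero.ne N)
    have hNA : 0 ≤ (N:ℝ) * A * B * ε := by positivity
    have hcz : c = 0 := le_antisymm (by rw [hCC] at hCp; linarith) hcnn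
    have hεz : ε = 0 := by
      rcases eq_or_lt_of_le hε with h | h
      · exact h.symm
      · exfalso
        have hP : 0 < (N:ℝ) * A * B * ε :=
          mul_pos (mul_pos (mul_pos hNpos hApos) hBpos) h
        rw [hCC, hcz] at hCp
        linarith
    have hOu : ∀ k, O (u k) = u k := by
      intro k
      have := hloc k
      rw [hεz] at this
      have h0 : u k - O (u k) = 0 := by
        have := le_antisymm this (norm_nonneg _)
        exact norm_eq_zero.mp this
      have := sub_eq_zero.mp h0
      exact this.symm
    have hTz : ∀ j k, T j k = 0 := by
      intro j k
      have h1 := hcjk_le j k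
      rw [hcz] at h1
      have h2 : ‖T j k‖ ≤ 0 := by
        have := mul_pos (hα k) (hβ j)
        nlinarith [norm_nonneg (T j k)]
      exact norm_eq_zero.mp (le_antisymm h2 (norm_nonneg _))
    have hvz : ∀ j, v j = 0 := by
      intro j
      have h1 : v j = ∑ k, T j k (u k) := by
        calc v j = (π j).adjoint (U ψ) := by rw [hvdef]
          _ = (π j).adjoint (U (∑ k, (π k) (u k))) := by rw [hrecomb_full]
          _ = ∑ k, (π j).adjoint (U ((π k) (u k))) := by rw [map_sum, map_sum]
          _ = ∑ k, T j k (u k) := by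
              refine Finset.sum_congr rfl fun k _ => ?_
              rw [hTapply, hOu]
      rw [h1]
      simp [hTz]
    have : (1:ℝ) = 0 := by
      rw [← hq1]
      refine (Finset.sum_congr rfl fun j _ => ?_).trans Finset.sum_const_zero
      rw [hq]
      simp [hvz j]
    norm_num at this
  -- the weighted moment functions
  set G : ℝ → ℝ := fun t => ∑ j ∈ J, q j * Real.exp (t * (-Real.log (r j))) with hG
  set Gh : ℝ → ℝ := fun t => ∑ k ∈ K, p k * Real.exp (t * (-Real.log (s k))) with hGh
  have hqJ : ∑ j ∈ J, q j = 1 := by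
    rw [← hq1]
    apply Finset.sum_subset (Finset.subset_univ J)
    intro j _ hj
    rw [hJ] at hj
    simpa using hj
  have hpK : ∑ k ∈ K, p k = 1 := by
    rw [← hp1]
    apply Finset.sum_subset (Finset.subset_univ K)
    intro k _ hk
    rw [hK] at hk
    simpa using hk
  have hJne : J.Nonempty := by
    apply Finset.nonempty_of_sum_ne_zero (f := q)
    rw [hqJ]; norm_num
  have hKne : K.Nonempty := by
    apply Finset.nonempty_of_sum_ne_zero (f := p)
    rw [hpK]; norm_num
  have hGpos : ∀ t, 0 < G t := by
    intro t
    refine Finset.sum_pos (fun j hj => ?_) hJne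
    have : q j ≠ 0 := by
      rw [hJ] at hj; simpa using hj
    exact mul_pos (lt_of_le_of_ne (hqnn j) (Ne.symm this)) (Real.exp_pos _)
  have hGhpos : ∀ t, 0 < Gh t := by
    intro t
    refine Finset.sum_pos (fun k hk => ?_) hKne
    have : p k ≠ 0 := by
      rw [hK] at hk; simpa using hk
    exact mul_pos (lt_of_le_of_ne (hpnn k) (Ne.symm this)) (Real.exp_pos _)
  -- THE KEY INEQUALITY (via Hadamard three lines)
  have KEY : ∀ σ : ℝ, 0 < σ →
      0 ≤ Real.log (G σ) + Real.log (Gh σ) + 2 * σ * Real.log CC := by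
    intro σ hσ
    have h1σ : (0:ℝ) < 1 + σ := by linarith
    set θ : ℝ := σ / (1 + σ) with hθdef
    have hθ0 : 0 ≤ θ := by positivity
    have hθlt : θ < 1 := by rw [hθdef, div_lt_one h1σ]; linarith
    have h1θ : 1 - θ = 1 / (1 + σ) := by rw [hθdef]; field_simp; ring
    have h1θpos : 0 < 1 - θ := by rw [h1θ]; positivity
    set δ : ℂ → ℂ := fun z => (((1 + σ) / 2 : ℝ) : ℂ) * z - ((σ / 2 : ℝ) : ℂ) with hδ
    set L : Fin N → Fin N → ℝ := fun j k => Real.log (r j) + Real.log (s k) with hLdef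
    set f : ℂ → ℂ := fun z =>
      ∑ jk ∈ J ×ˢ K, Complex.exp ((L jk.1 jk.2 : ℂ) * δ z) * cjk jk.1 jk.2 with hf
    have hδre : ∀ z : ℂ, (δ z).re = (1 + σ) / 2 * z.re - σ / 2 := by
      intro z
      rw [hδ]
      simp [Complex.sub_re, Complex.ofReal_re]
    have hterm : ∀ (l : ℝ) (w z : ℂ),
        ‖Complex.exp ((l : ℂ) * δ z) * w‖ = Real.exp (l * (δ z).re) * ‖w‖ := by
      intro l w z
      rw [norm_mul, Complex.norm_exp]
      congr 2
      simp
    set y : ℂ → H := fun z =>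
      ∑ k ∈ K, Complex.exp ((Real.log (s k) : ℂ) * δ z) • (π k) (u k) with hy
    have hregroup : ∀ z, f z = ∑ j ∈ J, Complex.exp ((Real.log (r j) : ℂ) * δ z)
        * inner ℂ (v j) ((π j).adjoint (U (y z))) := by
      intro z
      rw [hf]
      simp only []
      rw [Finset.sum_product]
      refine Finset.sum_congr rfl fun j _ => ?_
      rw [hy]
      simp only []
      rw [← hsumc K (fun k => Complex.exp ((Real.log (s k) : ℂ) * δ z)) j, Finset.mul_sum]
      refine Finset.sum_congr rfl fun k _ => ?_
      rw [hLdef]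
      simp only []
      push_cast
      rw [add_mul, Complex.exp_add]
      ring
    have hδθ : δ ((θ : ℝ) : ℂ) = 0 := by
      have h0 : (1 + σ) / 2 * θ - σ / 2 = 0 := by
        rw [hθdef]; field_simp; ring
      rw [hδ]
      simp only []
      rw [← Complex.ofReal_mul, ← Complex.ofReal_sub, h0, Complex.ofReal_zero]
    have hfθ : f ((θ : ℝ) : ℂ) = 1 := by
      rw [hregroup]
      have hyθ : y ((θ:ℝ):ℂ) = ψ := by
        rw [hy]
        simp only [hδθ, mul_zero, Complex.exp_zero, one_smul]
        exact hrecombK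
      rw [hyθ, hδθ]
      simp only [mul_zero, Complex.exp_zero, one_mul]
      have : ∀ j, (inner ℂ (v j) ((π j).adjoint (U ψ)) : ℂ) = ((q j : ℝ) : ℂ) := by
        intro j
        have : (π j).adjoint (U ψ) = v j := by rw [hvdef]
        rw [this, inner_self_eq_norm_sq_to_K, hq]
        norm_cast
      rw [Finset.sum_congr rfl (fun j _ => this j)]
      rw [← Complex.ofReal_sum]
      rw [hqJ]
      norm_num
    have hdiff : Differentiable ℂ f := by
      rw [hf]
      apply Differentiable.fun_sum
      intro jk _
      apply Differentiable.mul_const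
      apply Differentiable.cexp
      apply Differentiable.const_mul
      rw [hδ]
      exact (differentiable_id.const_mul _).sub_const _
    have hBdd : BddAbove ((norm ∘ f) ''
        Complex.HadamardThreeLines.verticalClosedStrip 0 1) := by
      refine ⟨∑ jk ∈ J ×ˢ K, Real.exp (|L jk.1 jk.2| * (1 + σ)) * ‖cjk jk.1 jk.2‖, ?_⟩
      rintro x ⟨z, hz, rfl⟩
      simp only [Function.comp_apply]
      rw [hf]
      simp only []
      refine (norm_sum_le _ _).trans ?_
      refine Finset.sum_le_sum fun jk _ => ?_
      rw [hterm]
      refine mul_le_mul_of_nonneg_right (Real.exp_le_exp.mpr ?_) (norm_nonneg _)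
      have hz' : z.re ∈ Set.Icc (0:ℝ) 1 := by
        simpa [Complex.HadamardThreeLines.verticalClosedStrip, Set.mem_preimage] using hz
      calc L jk.1 jk.2 * (δ z).re ≤ |L jk.1 jk.2 * (δ z).re| := le_abs_self _
        _ = |L jk.1 jk.2| * |(δ z).re| := abs_mul _ _
        _ ≤ |L jk.1 jk.2| * (1 + σ) := by
            refine mul_le_mul_of_nonneg_left ?_ (abs_nonneg _)
            rw [hδre, abs_le]
            have hz1 : 0 ≤ z.re := hz'.1
            have hz2 : z.re ≤ 1 := hz'.2
            constructor <;> nlinarith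
    have hbound1 : ∀ z : ℂ, z.re = 1 → ‖f z‖ ≤ CC := by
      intro z hz1
      have hδre1 : (δ z).re = 1 / 2 := by rw [hδre, hz1]; ring
      have hsqrt : ∀ (t : ℝ), 0 < t → Real.exp (Real.log (t ^ 2) / 2) = t := by
        intro t ht
        rw [Real.log_pow]
        push_cast
        rw [show (2:ℝ) * Real.log t / 2 = Real.log t by ring, Real.exp_log ht]
      have hstep : ∀ jk ∈ J ×ˢ K, Real.exp (L jk.1 jk.2 * (1/2)) * ‖cjk jk.1 jk.2‖
          ≤ c * (q jk.1 * p jk.2) + A * B * (q jk.1 * ‖u jk.2‖) * ε := by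
        rintro ⟨j, k⟩ hjk
        rw [Finset.mem_product] at hjk
        have hqj : q j ≠ 0 := by
          have := hjk.1; rw [hJ] at this; simpa using this
        have hpk : p k ≠ 0 := by
          have := hjk.2; rw [hK] at this; simpa using this
        have hvj : 0 < ‖v j‖ := by
          rcases eq_or_lt_of_le (norm_nonneg (v j)) with h | h
          · exfalso; apply hqj; rw [hq]; simp [← h]
          · exact h
        have huk : 0 < ‖u k‖ := by
          rcases eq_or_lt_of_le (norm_nonneg (u k)) with h | h
          · exfalso; apply hpk; rw [hp]; simp [← h]
          · exact h
        have hrj : r j = (β j * ‖v j‖) ^ 2 := by rw [hr, hq]; ring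
        have hsk : s k = (α k * ‖u k‖) ^ 2 := by rw [hs, hp]; ring
        have hexpL : Real.exp (L j k * (1/2))
            = (β j * ‖v j‖) * (α k * ‖u k‖) := by
          rw [hLdef]
          simp only []
          rw [show (Real.log (r j) + Real.log (s k)) * (1/2)
            = Real.log (r j) / 2 + Real.log (s k) / 2 by ring, Real.exp_add,
            hrj, hsk, hsqrt _ (mul_pos (hβ j) hvj), hsqrt _ (mul_pos (hα k) huk)]
        rw [hexpL]
        have h1 : (β j * ‖v j‖) * (α k * ‖u k‖) * ‖cjk j k‖
            ≤ (β j * ‖v j‖) * (α k * ‖u k‖) * (‖v j‖ * (‖T j k‖ * ‖u k‖ + ε)) := by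
          exact mul_le_mul_of_nonneg_left (hcb j k)
            (mul_nonneg (mul_nonneg (hβ j).le (norm_nonneg _))
              (mul_nonneg (hα k).le (norm_nonneg _)))
        refine h1.trans ?_
        have h2 : (β j * ‖v j‖) * (α k * ‖u k‖) * (‖v j‖ * (‖T j k‖ * ‖u k‖ + ε))
            = (α k * β j * ‖T j k‖) * (‖v j‖^2 * ‖u k‖^2)
              + (α k * β j) * (‖v j‖^2 * ‖u k‖) * ε := by ring
        rw [h2]
        have hαβ : α k * β j ≤ A * B := mul_le_mul (hAk k) (hBj j) (hβ j).le hApos.le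
        have e3 : (α k * β j * ‖T j k‖) * (‖v j‖^2 * ‖u k‖^2) ≤ c * (q j * p k) := by
          have hqp : q j * p k = ‖v j‖^2 * ‖u k‖^2 := by rw [hq, hp]
          rw [hqp]
          exact mul_le_mul_of_nonneg_right (hcjk_le j k) (by positivity)
        have e4 : (α k * β j) * (‖v j‖^2 * ‖u k‖) * ε ≤ A * B * (q j * ‖u k‖) * ε := by
          have hq' : q j = ‖v j‖^2 := by rw [hq]
          rw [hq']
          refine mul_le_mul_of_nonneg_right
            (mul_le_mul_of_nonneg_right hαβ (by positivity)) hε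
        linarith
      calc ‖f z‖ ≤ ∑ jk ∈ J ×ˢ K, Real.exp (L jk.1 jk.2 * (1/2)) * ‖cjk jk.1 jk.2‖ := by
            rw [hf]
            simp only []
            refine (norm_sum_le _ _).trans (Finset.sum_le_sum fun jk _ => ?_)
            rw [hterm, hδre1]
        _ ≤ ∑ jk ∈ J ×ˢ K, (c * (q jk.1 * p jk.2) + A * B * (q jk.1 * ‖u jk.2‖) * ε) :=
            Finset.sum_le_sum hstep
        _ ≤ ∑ jk ∈ (Finset.univ ×ˢ Finset.univ : Finset (Fin N × Fin N)),
              (c * (q jk.1 * p jk.2) + A * B * (q jk.1 * ‖u jk.2‖) * ε) := by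
            refine Finset.sum_le_sum_of_subset_of_nonneg ?_ (fun jk _ _ => ?_)
            · exact Finset.product_subset_product (Finset.subset_univ J) (Finset.subset_univ K)
            · have h6 : 0 ≤ q jk.1 := hqnn jk.1
              have h7 : 0 ≤ p jk.2 := hpnn jk.2
              have h8 : 0 ≤ ‖u jk.2‖ := norm_nonneg _
              positivity
        _ = c * ((∑ j, q j) * (∑ k, p k))
              + A * B * ε * ((∑ j, q j) * (∑ k, ‖u k‖)) := by
            have hprod : ∀ (F Gk : Fin N → ℝ),
                ∑ jk ∈ (Finset.univ ×ˢ Finset.univ : Finset (Fin N × Fin N)),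
                  F jk.1 * Gk jk.2 = (∑ j, F j) * (∑ k, Gk k) := by
              intro F Gk
              rw [Finset.sum_product, Finset.sum_mul_sum]
            rw [Finset.sum_add_distrib]
            congr 1
            · rw [← Finset.mul_sum, hprod q p]
            · have hrw : ∀ jk : Fin N × Fin N,
                  A * B * (q jk.1 * ‖u jk.2‖) * ε
                    = (A * B * ε) * (q jk.1 * ‖u jk.2‖) := fun jk => by ring
              rw [Finset.sum_congr rfl (fun jk _ => hrw jk), ← Finset.mul_sum,
                hprod q (fun k => ‖u k‖)]
        _ ≤ c + (N:ℝ) * A * B * ε := by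
            rw [hq1, hp1, one_mul, mul_one]
            have hsum_u : ∑ k, ‖u k‖ ≤ (N:ℝ) := by
              calc ∑ k, ‖u k‖ ≤ ∑ _k : Fin N, (1:ℝ) :=
                    Finset.sum_le_sum fun k _ => hukle k
                _ = (N:ℝ) := by simp
            have h5 : A * B * ε * (∑ k, ‖u k‖) ≤ A * B * ε * (N:ℝ) :=
              mul_le_mul_of_nonneg_left hsum_u (by positivity)
            nlinarith
        _ = CC := by rw [hCC]
    have hbound0 : ∀ z : ℂ, z.re = 0 → ‖f z‖ ≤ Real.sqrt (G σ * Gh σ) := by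
      intro z hz0
      have hδre0 : (δ z).re = -(σ / 2) := by rw [hδre, hz0]; ring
      have hyb : ‖y z‖ ^ 2 ≤ Gh σ := by
        have h1 : y z = ∑ k ∈ K, (π k) (Complex.exp ((Real.log (s k) : ℂ) * δ z) • u k) := by
          rw [hy]
          exact Finset.sum_congr rfl fun k _ => by rw [map_smul]
        rw [h1]
        refine (hL2 K _).trans ?_
        rw [hGh]
        refine le_of_eq (Finset.sum_congr rfl fun k _ => ?_)
        rw [norm_smul, mul_pow, Complex.norm_exp]
        have e0 : ((Real.log (s k) : ℂ) * δ z).re = Real.log (s k) * (δ z).re := by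
          simp
        rw [e0, hδre0]
        have e1 : Real.exp (Real.log (s k) * -(σ/2)) ^ 2
            = Real.exp (σ * -Real.log (s k)) := by
          rw [sq, ← Real.exp_add]; congr 1; ring
        have e2 : ‖u k‖ ^ 2 = p k := by rw [hp]
        rw [e1, e2, mul_comm]
      have hcs : ‖f z‖ ≤ ∑ j ∈ J, (Real.exp (σ * -Real.log (r j) / 2) * ‖v j‖)
          * ‖(π j).adjoint (U (y z))‖ := by
        rw [hregroup]
        refine (norm_sum_le _ _).trans (Finset.sum_le_sum fun j _ => ?_)
        rw [hterm, hδre0]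
        have e3 : Real.log (r j) * -(σ/2) = σ * -Real.log (r j) / 2 := by ring
        rw [e3, mul_assoc]
        exact mul_le_mul_of_nonneg_left (norm_inner_le_norm _ _) (Real.exp_pos _).le
      refine hcs.trans ?_
      refine (Real.sum_mul_le_sqrt_mul_sqrt J _ _).trans ?_
      have hGsum : ∑ j ∈ J, (Real.exp (σ * -Real.log (r j) / 2) * ‖v j‖) ^ 2 = G σ := by
        rw [hG]
        refine Finset.sum_congr rfl fun j _ => ?_
        rw [mul_pow]
        have e4 : Real.exp (σ * -Real.log (r j) / 2) ^ 2
            = Real.exp (σ * -Real.log (r j)) := by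
          rw [sq, ← Real.exp_add]; congr 1; ring
        have e5 : ‖v j‖ ^ 2 = q j := by rw [hq]
        rw [e4, e5, mul_comm]
      have hUy : ∑ j ∈ J, ‖(π j).adjoint (U (y z))‖ ^ 2 ≤ Gh σ := by
        calc ∑ j ∈ J, ‖(π j).adjoint (U (y z))‖ ^ 2
            ≤ ∑ j, ‖(π j).adjoint (U (y z))‖ ^ 2 :=
              Finset.sum_le_sum_of_subset_of_nonneg (Finset.subset_univ J)
                (fun _ _ _ => sq_nonneg _)
          _ = ‖U (y z)‖ ^ 2 := hadj _
          _ = ‖y z‖ ^ 2 := by rw [U.norm_map]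
          _ ≤ Gh σ := hyb
      rw [hGsum]
      calc Real.sqrt (G σ) * Real.sqrt (∑ j ∈ J, ‖(π j).adjoint (U (y z))‖ ^ 2)
          ≤ Real.sqrt (G σ) * Real.sqrt (Gh σ) :=
            mul_le_mul_of_nonneg_left (Real.sqrt_le_sqrt hUy) (Real.sqrt_nonneg _)
        _ = Real.sqrt (G σ * Gh σ) := (Real.sqrt_mul (hGpos σ).le _).symm
    -- Hadamard three lines
    have hzmem : ((θ:ℝ):ℂ) ∈ Complex.HadamardThreeLines.verticalClosedStrip 0 1 := by
      simp only [Complex.HadamardThreeLines.verticalClosedStrip, Set.mem_preimage,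
        Complex.ofReal_re]
      exact ⟨hθ0, hθlt.le⟩
    have hHad := Complex.HadamardThreeLines.norm_le_interp_of_mem_verticalClosedStrip₀₁' f
      hzmem hdiff.diffContOnCl hBdd
      (fun z hz => hbound0 z (by simpa using hz))
      (fun z hz => hbound1 z (by simpa using hz))
    rw [hfθ] at hHad
    simp only [norm_one, Complex.ofReal_re] at hHad
    -- now hHad : 1 ≤ sqrt (G σ * Gh σ) ^ (1 - θ) * CC ^ θ  (rpow)
    have hM0pos : 0 < Real.sqrt (G σ * Gh σ) :=
      Real.sqrt_pos.mpr (mul_pos (hGpos σ) (hGhpos σ))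
    have hlog : 0 ≤ (1 - θ) * Real.log (Real.sqrt (G σ * Gh σ)) + θ * Real.log CC := by
      have h1 : (0:ℝ) = Real.log 1 := Real.log_one.symm
      have h2 := Real.log_le_log (by norm_num) hHad
      rw [Real.log_one, Real.log_mul (Real.rpow_pos_of_pos hM0pos _).ne'
        (Real.rpow_pos_of_pos hCpos _).ne',
        Real.log_rpow hM0pos, Real.log_rpow hCpos] at h2
      linarith
    have hlogM0 : Real.log (Real.sqrt (G σ * Gh σ))
        = (Real.log (G σ) + Real.log (Gh σ)) / 2 := by
      rw [Real.log_sqrt (mul_pos (hGpos σ) (hGhpos σ)).le,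
        Real.log_mul (hGpos σ).ne' (hGhpos σ).ne']
    rw [hlogM0, h1θ, hθdef] at hlog
    have hmul := mul_le_mul_of_nonneg_left hlog (show (0:ℝ) ≤ 2 * (1 + σ) by positivity)
    rw [mul_zero] at hmul
    have hexp : 2 * (1 + σ) * (1 / (1 + σ) * ((Real.log (G σ) + Real.log (Gh σ)) / 2)
        + σ / (1 + σ) * Real.log CC)
        = Real.log (G σ) + Real.log (Gh σ) + 2 * σ * Real.log CC := by
      field_simp
    rw [hexp] at hmul
    exact hmul

  -- derivative step
  have hderiv : -(∑ j ∈ J, q j * Real.log (r j)) - (∑ k ∈ K, p k * Real.log (s k))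
      + 2 * Real.log CC ≥ 0 := by
    have hG0 : G 0 = 1 := by
      rw [hG]
      simp only [zero_mul, Real.exp_zero, mul_one]
      exact hqJ
    have hGh0 : Gh 0 = 1 := by
      rw [hGh]
      simp only [zero_mul, Real.exp_zero, mul_one]
      exact hpK
    have hdG : HasDerivAt G (∑ j ∈ J, q j * -Real.log (r j)) 0 := by
      rw [hG]
      refine HasDerivAt.fun_sum fun j _ => ?_
      have h1 : HasDerivAt (fun t : ℝ => t * -Real.log (r j)) (-Real.log (r j)) 0 :=
        hasDerivAt_mul_const _
      have h3 := h1.exp.const_mul (q j)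
      simpa using h3
    have hdGh : HasDerivAt Gh (∑ k ∈ K, p k * -Real.log (s k)) 0 := by
      rw [hGh]
      refine HasDerivAt.fun_sum fun k _ => ?_
      have h1 : HasDerivAt (fun t : ℝ => t * -Real.log (s k)) (-Real.log (s k)) 0 :=
        hasDerivAt_mul_const _
      have h3 := h1.exp.const_mul (p k)
      simpa using h3
    set D : ℝ := (∑ j ∈ J, q j * -Real.log (r j)) + (∑ k ∈ K, p k * -Real.log (s k))
      + 2 * Real.log CC with hD
    set Φ : ℝ → ℝ := fun t => Real.log (G t) + Real.log (Gh t) + 2 * t * Real.log CC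
      with hΦ
    have hdΦ : HasDerivAt Φ D 0 := by
      have l1 := hdG.log (by rw [hG0]; norm_num)
      have l2 := hdGh.log (by rw [hGh0]; norm_num)
      have l3 : HasDerivAt (fun t : ℝ => 2 * t * Real.log CC) (2 * Real.log CC) 0 := by
        have h4 := (hasDerivAt_mul_const (Real.log CC)).const_mul (2:ℝ) (x := (0:ℝ))
        simpa [mul_assoc] using h4
      have := (l1.fun_add l2).fun_add l3
      rw [hG0, hGh0] at this
      simpa [hΦ, hD] using this
    have hΦ0 : Φ 0 = 0 := by
      rw [hΦ]
      simp [hG0, hGh0]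
    have hslope : Filter.Tendsto (slope Φ 0) (nhdsWithin 0 (Set.Ioi 0)) (nhds D) := by
      refine (hasDerivAt_iff_tendsto_slope.mp hdΦ).mono_left (nhdsWithin_mono _ ?_)
      intro x hx
      simp only [Set.mem_compl_iff, Set.mem_singleton_iff]
      exact (ne_of_gt hx)
    have hnonneg : ∀ᶠ t in nhdsWithin 0 (Set.Ioi 0), 0 ≤ slope Φ 0 t := by
      filter_upwards [self_mem_nhdsWithin] with t ht
      have hKEY := KEY t ht
      rw [slope_def_field, hΦ0, sub_zero, sub_zero]
      have hΦt : Φ t = Real.log (G t) + Real.log (Gh t) + 2 * t * Real.log CC := by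
        rw [hΦ]
      rw [hΦt]
      exact div_nonneg hKEY (le_of_lt ht)
    have hD0 : 0 ≤ D := ge_of_tendsto hslope hnonneg
    have e1 : ∑ j ∈ J, q j * -Real.log (r j) = -(∑ j ∈ J, q j * Real.log (r j)) := by
      rw [← Finset.sum_neg_distrib]
      exact Finset.sum_congr rfl fun j _ => by ring
    have e2 : ∑ k ∈ K, p k * -Real.log (s k) = -(∑ k ∈ K, p k * Real.log (s k)) := by
      rw [← Finset.sum_neg_distrib]
      exact Finset.sum_congr rfl fun k _ => by ring
    rw [hD, e1, e2] at hD0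
    linarith
  -- final rewriting
  have hJr : ∑ j, q j * Real.log (r j) = ∑ j ∈ J, q j * Real.log (r j) := by
    symm
    apply Finset.sum_subset (Finset.subset_univ J)
    intro j _ hj
    rw [hJ] at hj
    simp only [Finset.mem_filter, Finset.mem_univ, true_and, not_not] at hj
    rw [hj, zero_mul]
  have hKs : ∑ k, p k * Real.log (s k) = ∑ k ∈ K, p k * Real.log (s k) := by
    symm
    apply Finset.sum_subset (Finset.subset_univ K)
    intro k _ hk
    rw [hK] at hk
    simp only [Finset.mem_filter, Finset.mem_univ, true_and, not_not] at hk
    rw [hk, zero_mul]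
  have hsplitq : ∀ j, q j * Real.log (q j) + q j * Real.log (β j ^ 2)
      = q j * Real.log (r j) := by
    intro j
    rcases eq_or_ne (q j) 0 with h | h
    · rw [h]
      simp
    · have : r j = β j ^ 2 * q j := by rw [hr]
      rw [this, Real.log_mul (pow_ne_zero 2 (hβ j).ne') h]
      ring
  have hsplitp : ∀ k, p k * Real.log (p k) + p k * Real.log (α k ^ 2)
      = p k * Real.log (s k) := by
    intro k
    rcases eq_or_ne (p k) 0 with h | h
    · rw [h]
      simp
    · have : s k = α k ^ 2 * p k := by rw [hs]
      rw [this, Real.log_mul (pow_ne_zero 2 (hα k).ne') h]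
      ring
  have hfinal : ((-∑ j, q j * Real.log (q j)) - ∑ j, q j * Real.log (β j ^ 2))
      + ((-∑ k, p k * Real.log (p k)) - ∑ k, p k * Real.log (α k ^ 2))
      ≥ -2 * Real.log CC := by
    have hq_eq : (∑ j, q j * Real.log (q j)) + (∑ j, q j * Real.log (β j ^ 2))
        = ∑ j ∈ J, q j * Real.log (r j) := by
      rw [← Finset.sum_add_distrib, ← hJr]
      exact Finset.sum_congr rfl fun j _ => hsplitq j
    have hp_eq : (∑ k, p k * Real.log (p k)) + (∑ k, p k * Real.log (α k ^ 2))
        = ∑ k ∈ K, p k * Real.log (s k) := by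
      rw [← Finset.sum_add_distrib, ← hKs]
      exact Finset.sum_congr rfl fun k _ => hsplitp k
    linarith [hderiv]
  exact hfinal
end

section
/- Let H be a complex Hilbert space with an orthonormal basis (e_k)_{k=1,...,N}, and let U : H → H be unitary. Set c(U) = max_{j,k} |⟨e_j, U e_k⟩|. For a unit vector ψ, define the Shannon entropy h(ψ) = −∑_k |⟨e_k, ψ⟩|² log |⟨e_k, ψ⟩|². Then for every unit vector ψ, h(Uψ) + h(ψ) ≥ −2 log c(U). -/
open Complex Finset Real

noncomputable section MUaux

/-- Analytic family member: `u` rescaled by `|u| ^ (r*(1+z)/2 - 1)`. -/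
def Xf (u : ℂ) (r : ℝ) (z : ℂ) : ℂ :=
  if u = 0 then 0 else u * Complex.exp ((Real.log (norm u) : ℂ) * ((r : ℂ) * (1 + z) / 2 - 1))

lemma Xf_differentiable (u : ℂ) (r : ℝ) : Differentiable ℂ (Xf u r) := by
  unfold Xf
  split_ifs with h
  · exact differentiable_const 0
  · exact differentiable_const u |>.mul <| Complex.differentiable_exp.comp <| by fun_prop

lemma abs_Xf (u : ℂ) (r : ℝ) (z : ℂ) (hE : 0 < r * (1 + z.re) / 2) :
    norm (Xf u r z) = norm u ^ (r * (1 + z.re) / 2) := by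
  unfold Xf
  split_ifs with h
  · simp [h, Real.zero_rpow (ne_of_gt hE)]
  · have hu : 0 < norm u := by simpa [norm_pos_iff] using h
    rw [norm_mul, Complex.norm_exp]
    have hre : ((Real.log (norm u) : ℂ) * ((r : ℂ) * (1 + z) / 2 - 1)).re
        = Real.log (norm u) * (r * (1 + z.re) / 2 - 1) := by
      simp [Complex.mul_re, Complex.ofReal_re, Complex.ofReal_im, Complex.sub_re, Complex.div_re,
        Complex.add_re, Complex.add_im, Complex.mul_im]
    rw [hre, ← Real.rpow_def_of_pos hu]
    nth_rw 1 [← Real.rpow_one (norm u)]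
    rw [← Real.rpow_add hu]
    ring_nf

lemma Xf_at (u : ℂ) (r t : ℝ) (h : r * (1 + t) / 2 = 1) : Xf u r (t : ℂ) = u := by
  unfold Xf
  split_ifs with hu
  · exact hu.symm
  · have : (r : ℂ) * (1 + (t : ℂ)) / 2 - 1 = 0 := by
      have := congrArg (fun x : ℝ => (x : ℂ)) h
      push_cast at this
      rw [this]; ring
    rw [this, mul_zero, Complex.exp_zero, mul_one]

/-- Dual analytic family member. -/
def Yf (u : ℂ) (r : ℝ) (z : ℂ) : ℂ :=
  if u = 0 then 0 else (starRingEnd ℂ) u *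
    Complex.exp ((Real.log (norm u) : ℂ) * ((r : ℂ) * (1 + z) / 2 - 1))

lemma Yf_differentiable (u : ℂ) (r : ℝ) : Differentiable ℂ (Yf u r) := by
  unfold Yf
  split_ifs with h
  · exact differentiable_const 0
  · exact differentiable_const _ |>.mul <| Complex.differentiable_exp.comp <| by fun_prop

lemma abs_Yf (u : ℂ) (r : ℝ) (z : ℂ) (hE : 0 < r * (1 + z.re) / 2) :
    norm (Yf u r z) = norm u ^ (r * (1 + z.re) / 2) := by
  have := abs_Xf u r z hE
  unfold Yf
  unfold Xf at this
  split_ifs with h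
  · subst h; simpa using this
  · simp only [if_neg h] at this
    rw [← this, norm_mul, norm_mul, Complex.norm_conj]

lemma Yf_mul_self (u : ℂ) (r t : ℝ) (hE : 0 < r * (1 + t) / 2 + 1) :
    Yf u r (t : ℂ) * u = ((norm u ^ (r * (1 + t) / 2 + 1) : ℝ) : ℂ) := by
  unfold Yf
  split_ifs with h
  · simp [h, Real.zero_rpow (ne_of_gt hE)]
  · have hu : 0 < norm u := by simpa [norm_pos_iff] using h
    have harg : (Real.log (norm u) : ℂ) * ((r : ℂ) * (1 + (t : ℂ)) / 2 - 1)
        = ((Real.log (norm u) * (r * (1 + t) / 2 - 1) : ℝ) : ℂ) := by push_cast; ring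
    rw [harg, ← Complex.ofReal_exp, ← Real.rpow_def_of_pos hu]
    rw [mul_comm ((starRingEnd ℂ) u), mul_assoc, mul_comm ((starRingEnd ℂ) u) u]
    rw [Complex.mul_conj, Complex.normSq_eq_norm_sq, ← Complex.ofReal_mul]
    congr 1
    rw [← Real.rpow_natCast (norm u) 2, ← Real.rpow_add hu]
    congr 1
    push_cast
    ring


lemma rt_bound {N : ℕ} (a b : Fin N → ℂ) (M : Fin N → Fin N → ℂ) (c : ℝ) (hcpos : 0 < c)
    (hM : ∀ j k, norm (M j k) ≤ c)
    (hiso : ∀ x : Fin N → ℂ,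
      ∑ j, norm (∑ k, M j k * x k) ^ 2 = ∑ k, norm (x k) ^ 2)
    (hb : ∀ j, b j = ∑ k, M j k * a k)
    (ha1 : ∑ k, norm (a k) ^ 2 = 1)
    {t : ℝ} (ht0 : 0 < t) (ht1 : t < 1) :
    (1 - t) / 2 * Real.log (∑ j, (norm (b j) ^ 2 : ℝ) ^ (1 / (1 - t)))
      ≤ t * Real.log c
        + (1 + t) / 2 * Real.log (∑ k, (norm (a k) ^ 2 : ℝ) ^ (1 / (1 + t))) := by
  have h1t : (0:ℝ) < 1 - t := by linarith
  have h1t' : (0:ℝ) < 1 + t := by linarith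
  set p : ℝ := 2 / (1 + t) with hp_def
  set q : ℝ := 2 / (1 - t) with hq_def
  have hp : 0 < p := by positivity
  have hq : 0 < q := by positivity
  -- rewrite the goal sums
  have hsq : ∀ (u : ℂ) (r s : ℝ), 2 * s = r → (norm u ^ 2 : ℝ) ^ s = norm u ^ r := by
    intro u r s hrs
    rw [← Real.rpow_natCast (norm u) 2, ← Real.rpow_mul (norm_nonneg u)]
    norm_num [hrs]
  simp_rw [hsq _ p (1/(1+t)) (by rw [hp_def]; ring), hsq _ q (1/(1-t)) (by rw [hq_def]; ring)]
  set Sa : ℝ := ∑ k, norm (a k) ^ p with hSa_def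
  set Sb : ℝ := ∑ j, norm (b j) ^ q with hSb_def
  have hb1 : ∑ j, norm (b j) ^ 2 = 1 := by
    simp_rw [hb]; rw [hiso a, ha1]
  have hex_a : ∃ k, a k ≠ 0 := by
    by_contra hcon
    push_neg at hcon
    simp [hcon] at ha1
  have hex_b : ∃ j, b j ≠ 0 := by
    by_contra hcon
    push_neg at hcon
    simp [hcon] at hb1
  have hSa_pos : 0 < Sa := by
    obtain ⟨k, hk⟩ := hex_a
    refine Finset.sum_pos' (fun i _ => Real.rpow_nonneg (norm_nonneg _) _)
      ⟨k, Finset.mem_univ k, Real.rpow_pos_of_pos (by simpa [norm_pos_iff] using hk) _⟩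
  have hSb_pos : 0 < Sb := by
    obtain ⟨j, hj⟩ := hex_b
    refine Finset.sum_pos' (fun i _ => Real.rpow_nonneg (norm_nonneg _) _)
      ⟨j, Finset.mem_univ j, Real.rpow_pos_of_pos (by simpa [norm_pos_iff] using hj) _⟩
  have ha_le1 : ∀ k, norm (a k) ≤ 1 := by
    intro k
    have h := Finset.single_le_sum (f := fun k => norm (a k) ^ 2)
      (fun i _ => sq_nonneg _) (Finset.mem_univ k)
    rw [ha1] at h
    nlinarith [norm_nonneg (a k)]
  have hb_le1 : ∀ j, norm (b j) ≤ 1 := by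
    intro j
    have h := Finset.single_le_sum (f := fun j => norm (b j) ^ 2)
      (fun i _ => sq_nonneg _) (Finset.mem_univ j)
    rw [hb1] at h
    nlinarith [norm_nonneg (b j)]
  -- the analytic function
  set F : ℂ → ℂ := fun z => ∑ j, ∑ k, Yf (b j) q z * (M j k * Xf (a k) p z) with hF_def
  have hFdiff : Differentiable ℂ F := by
    apply Differentiable.fun_sum
    intro j _
    apply Differentiable.fun_sum
    intro k _
    exact (Yf_differentiable _ _).mul ((Xf_differentiable _ _).const_mul _)
  -- pointwise bound by triangle inequality
  have htri : ∀ z : ℂ, 0 ≤ z.re →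
      norm (F z) ≤ ∑ j, ∑ k,
        norm (b j) ^ (q * (1 + z.re) / 2) * (norm (M j k)
          * norm (a k) ^ (p * (1 + z.re) / 2)) := by
    intro z hz
    have hEq : 0 < q * (1 + z.re) / 2 := by positivity
    have hEp : 0 < p * (1 + z.re) / 2 := by positivity
    calc norm (F z) ≤ ∑ j, norm (∑ k, Yf (b j) q z * (M j k * Xf (a k) p z)) :=
          norm_sum_le _ _
      _ ≤ ∑ j, ∑ k, norm (Yf (b j) q z * (M j k * Xf (a k) p z)) := by
          gcongr with j _
          exact norm_sum_le _ _
      _ = ∑ j, ∑ k, norm (b j) ^ (q * (1 + z.re) / 2) * (norm (M j k)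
          * norm (a k) ^ (p * (1 + z.re) / 2)) := by
          simp_rw [norm_mul, abs_Yf _ _ _ hEq, abs_Xf _ _ _ hEp]
  -- bounded on the strip
  have hBdd : BddAbove ((norm ∘ F) '' (Complex.HadamardThreeLines.verticalClosedStrip 0 1)) := by
    refine ⟨(N : ℝ) ^ 2 * c, ?_⟩
    rintro x ⟨z, hz, rfl⟩
    simp only [Function.comp_apply]
    have hz0 : 0 ≤ z.re := hz.1
    refine (htri z hz0).trans ?_
    calc (∑ j, ∑ k, norm (b j) ^ (q * (1 + z.re) / 2) * (norm (M j k)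
          * norm (a k) ^ (p * (1 + z.re) / 2)))
        ≤ ∑ j : Fin N, ∑ k : Fin N, 1 * (c * 1) := by
          gcongr with j _ k _ <;>
            first
              | positivity
              | exact hM j k
              | exact Real.rpow_le_one (norm_nonneg _) (hb_le1 j) (by positivity)
              | exact Real.rpow_le_one (norm_nonneg _) (ha_le1 k) (by positivity)
      _ = (N : ℝ) ^ 2 * c := by simp; ring
  -- bound on the line re z = 0
  have hline0 : ∀ z ∈ Complex.re ⁻¹' {0}, ‖F z‖ ≤ Real.sqrt Sb * Real.sqrt Sa := by
    intro z hz
    have hz0 : z.re = 0 := hz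
    have hEq : 0 < q * (1 + z.re) / 2 := by rw [hz0]; positivity
    have hEp : 0 < p * (1 + z.re) / 2 := by rw [hz0]; positivity
    have hF : F z = ∑ j, Yf (b j) q z * ∑ k, M j k * Xf (a k) p z := by
      simp_rw [hF_def, Finset.mul_sum]
    rw [hF]
    have h1 : norm (∑ j, Yf (b j) q z * ∑ k, M j k * Xf (a k) p z) ≤
        ∑ j, norm (Yf (b j) q z) * norm (∑ k, M j k * Xf (a k) p z) := by
      refine (norm_sum_le _ _).trans_eq ?_
      simp_rw [norm_mul]
    refine h1.trans ?_
    have hf2 : ∑ j, norm (Yf (b j) q z) ^ 2 = Sb := by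
      rw [hSb_def]
      refine Finset.sum_congr rfl fun j _ => ?_
      rw [abs_Yf _ _ _ hEq, ← Real.rpow_natCast (norm (b j) ^ (q * (1 + z.re) / 2)) 2,
        ← Real.rpow_mul (norm_nonneg _)]
      rw [hz0]
      norm_num
    have hg2 : ∑ j, norm (∑ k, M j k * Xf (a k) p z) ^ 2 = Sa := by
      rw [hiso (fun k => Xf (a k) p z), hSa_def]
      refine Finset.sum_congr rfl fun k _ => ?_
      rw [abs_Xf _ _ _ hEp, ← Real.rpow_natCast (norm (a k) ^ (p * (1 + z.re) / 2)) 2,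
        ← Real.rpow_mul (norm_nonneg _)]
      rw [hz0]
      norm_num
    have hcs := Finset.sum_mul_sq_le_sq_mul_sq Finset.univ
      (fun j => norm (Yf (b j) q z)) (fun j => norm (∑ k, M j k * Xf (a k) p z))
    rw [hf2, hg2] at hcs
    have hnn : 0 ≤ ∑ j, norm (Yf (b j) q z) * norm (∑ k, M j k * Xf (a k) p z) :=
      Finset.sum_nonneg fun j _ => mul_nonneg (norm_nonneg _) (norm_nonneg _)
    calc ∑ j, norm (Yf (b j) q z) * norm (∑ k, M j k * Xf (a k) p z)
        = Real.sqrt ((∑ j, norm (Yf (b j) q z)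
            * norm (∑ k, M j k * Xf (a k) p z)) ^ 2) := (Real.sqrt_sq hnn).symm
      _ ≤ Real.sqrt (Sb * Sa) := Real.sqrt_le_sqrt hcs
      _ = Real.sqrt Sb * Real.sqrt Sa := Real.sqrt_mul hSb_pos.le _
  -- bound on the line re z = 1
  have hline1 : ∀ z ∈ Complex.re ⁻¹' {1}, ‖F z‖ ≤ c * (Sb * Sa) := by
    intro z hz
    have hz1 : z.re = 1 := hz
    refine (htri z (by rw [hz1]; norm_num)).trans ?_
    have hqq : q * (1 + z.re) / 2 = q := by rw [hz1]; ring
    have hpp : p * (1 + z.re) / 2 = p := by rw [hz1]; ring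
    rw [show (∑ j, ∑ k, norm (b j) ^ (q * (1 + z.re) / 2) * (norm (M j k)
          * norm (a k) ^ (p * (1 + z.re) / 2)))
        = ∑ j, ∑ k, norm (b j) ^ q * (norm (M j k) * norm (a k) ^ p) by
      simp_rw [hqq, hpp]]
    calc (∑ j, ∑ k, norm (b j) ^ q * (norm (M j k) * norm (a k) ^ p))
        ≤ ∑ j, ∑ k, norm (b j) ^ q * (c * norm (a k) ^ p) := by
          gcongr with j _ k _ <;> first | positivity | exact hM j k
      _ = c * (Sb * Sa) := by
          simp_rw [← Finset.mul_sum, ← Finset.sum_mul, hSa_def, hSb_def]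
          ring
  -- value at the interior point t
  have hpt : p * (1 + t) / 2 = 1 := by rw [hp_def]; field_simp
  have hqt : q * (1 + t) / 2 + 1 = q := by rw [hq_def]; field_simp; ring
  have hFt : F (t : ℂ) = ((Sb : ℝ) : ℂ) := by
    have h1 : F (t : ℂ) = ∑ j, Yf (b j) q (t : ℂ) * b j := by
      simp_rw [hF_def, Xf_at _ _ _ hpt, ← Finset.mul_sum]
      refine Finset.sum_congr rfl fun j _ => ?_
      rw [← hb j]
    rw [h1]
    have h2 : ∀ j, Yf (b j) q ((t : ℝ) : ℂ) * b j = ((norm (b j) ^ q : ℝ) : ℂ) := by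
      intro j
      rw [Yf_mul_self _ _ _ (by positivity), hqt]
    simp_rw [h2]
    rw [hSb_def]
    push_cast
    rfl
  -- Hadamard three lines
  have hmem : (t : ℂ) ∈ Complex.HadamardThreeLines.verticalClosedStrip 0 1 := by
    simp only [Complex.HadamardThreeLines.verticalClosedStrip, Set.mem_preimage,
      Complex.ofReal_re, Set.mem_Icc]
    exact ⟨ht0.le, ht1.le⟩
  have hkey := Complex.HadamardThreeLines.norm_le_interp_of_mem_verticalClosedStrip₀₁' F hmem
    hFdiff.diffContOnCl hBdd hline0 hline1
  simp only [Complex.ofReal_re] at hkey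
  have hnorm : ‖F ((t : ℝ) : ℂ)‖ = Sb := by
    rw [hFt, Complex.norm_real, Real.norm_eq_abs, _root_.abs_of_nonneg hSb_pos.le]
  rw [hnorm] at hkey
  -- take logarithms
  have hC0 : (0:ℝ) < Real.sqrt Sb * Real.sqrt Sa :=
    mul_pos (Real.sqrt_pos.mpr hSb_pos) (Real.sqrt_pos.mpr hSa_pos)
  have hC1 : (0:ℝ) < c * (Sb * Sa) := mul_pos hcpos (mul_pos hSb_pos hSa_pos)
  have hlog : Real.log Sb ≤ (1 - t) * (Real.log Sb / 2 + Real.log Sa / 2)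
      + t * (Real.log c + (Real.log Sb + Real.log Sa)) := by
    have h2 := Real.log_le_log hSb_pos hkey
    rw [Real.log_mul (ne_of_gt (Real.rpow_pos_of_pos hC0 _)) (ne_of_gt (Real.rpow_pos_of_pos hC1 _)),
      Real.log_rpow hC0, Real.log_rpow hC1] at h2
    rw [Real.log_mul (ne_of_gt (Real.sqrt_pos.mpr hSb_pos)) (ne_of_gt (Real.sqrt_pos.mpr hSa_pos)),
      Real.log_sqrt hSb_pos.le, Real.log_sqrt hSa_pos.le,
      Real.log_mul (ne_of_gt hcpos) (ne_of_gt (mul_pos hSb_pos hSa_pos)),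
      Real.log_mul (ne_of_gt hSb_pos) (ne_of_gt hSa_pos)] at h2
    convert h2 using 2 <;> ring
  linarith [hlog]

lemma hasDerivAt_rpow_one_div_one_add (P : ℝ) (hP : 0 ≤ P) :
    HasDerivAt (fun t : ℝ => P ^ (1 / (1 + t))) (-(P * Real.log P)) 0 := by
  rcases eq_or_lt_of_le hP with h0 | h0
  · -- P = 0 : the function is eventually constant 0
    have heq : (fun t : ℝ => P ^ (1 / (1 + t))) =ᶠ[nhds (0:ℝ)] (fun _ : ℝ => (0:ℝ)) := by
      filter_upwards [Metric.ball_mem_nhds (0:ℝ) one_pos] with t ht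
      have ht' : |t| < 1 := by simpa [Real.dist_eq] using ht
      have h1 : (0:ℝ) < 1 + t := by have := abs_lt.mp ht'; linarith
      rw [← h0, Real.zero_rpow (by positivity)]
    have h2 := (hasDerivAt_const (0:ℝ) (0:ℝ)).congr_of_eventuallyEq heq
    have hz : -(P * Real.log P) = 0 := by rw [← h0]; simp
    rw [hz]; exact h2
  · have h1 : HasDerivAt (fun t : ℝ => 1 + t) 1 0 := by
      simpa using (hasDerivAt_id (0:ℝ)).const_add (1:ℝ)
    have h2 : HasDerivAt (fun t : ℝ => (1 + t)⁻¹) (-1) 0 := by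
      have := h1.inv (by norm_num)
      norm_num at this
      exact this
    have h4 := (h2.const_mul (Real.log P)).exp
    have heq : (fun t : ℝ => P ^ (1 / (1 + t)))
        = fun t : ℝ => Real.exp (Real.log P * (1 + t)⁻¹) := by
      funext t
      rw [Real.rpow_def_of_pos h0, one_div]
    rw [heq]
    convert h4 using 1
    rw [show (1:ℝ) + 0 = 1 by norm_num, inv_one, mul_one, Real.exp_log h0]
    ring

lemma hasDerivAt_rpow_one_div_one_sub (Q : ℝ) (hQ : 0 ≤ Q) :
    HasDerivAt (fun t : ℝ => Q ^ (1 / (1 - t))) (Q * Real.log Q) 0 := by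
  rcases eq_or_lt_of_le hQ with h0 | h0
  · have heq : (fun t : ℝ => Q ^ (1 / (1 - t))) =ᶠ[nhds (0:ℝ)] (fun _ : ℝ => (0:ℝ)) := by
      filter_upwards [Metric.ball_mem_nhds (0:ℝ) one_pos] with t ht
      have ht' : |t| < 1 := by simpa [Real.dist_eq] using ht
      have h1 : (0:ℝ) < 1 - t := by have := abs_lt.mp ht'; linarith
      rw [← h0, Real.zero_rpow (by positivity)]
    have h2 := (hasDerivAt_const (0:ℝ) (0:ℝ)).congr_of_eventuallyEq heq
    have hz : Q * Real.log Q = 0 := by rw [← h0]; simp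
    rw [hz]; exact h2
  · have h1 : HasDerivAt (fun t : ℝ => 1 - t) (-1) 0 := by
      exact (hasDerivAt_id' (0:ℝ)).const_sub (1:ℝ)
    have h2 : HasDerivAt (fun t : ℝ => (1 - t)⁻¹) 1 0 := by
      have := h1.inv (by norm_num)
      norm_num at this
      exact this
    have h4 := (h2.const_mul (Real.log Q)).exp
    have heq : (fun t : ℝ => Q ^ (1 / (1 - t)))
        = fun t : ℝ => Real.exp (Real.log Q * (1 - t)⁻¹) := by
      funext t
      rw [Real.rpow_def_of_pos h0, one_div]
    rw [heq]
    convert h4 using 1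
    rw [show (1:ℝ) - 0 = 1 by norm_num, inv_one, mul_one, Real.exp_log h0]

lemma deriv_step {N : ℕ} (P Q : Fin N → ℝ) (c : ℝ) (hc : 0 < c)
    (hP : ∀ k, 0 ≤ P k) (hQ : ∀ j, 0 ≤ Q j)
    (hP1 : ∑ k, P k = 1) (hQ1 : ∑ j, Q j = 1)
    (key : ∀ t : ℝ, 0 < t → t < 1 →
      (1 - t) / 2 * Real.log (∑ j, Q j ^ (1 / (1 - t)))
        ≤ t * Real.log c + (1 + t) / 2 * Real.log (∑ k, P k ^ (1 / (1 + t)))) :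
    -2 * Real.log c ≤ (-∑ j, Q j * Real.log (Q j)) + (-∑ k, P k * Real.log (P k)) := by
  set A : ℝ → ℝ := fun t => ∑ k, P k ^ (1 / (1 + t)) with hA_def
  set B : ℝ → ℝ := fun t => ∑ j, Q j ^ (1 / (1 - t)) with hB_def
  have hA0 : A 0 = 1 := by
    rw [hA_def]
    simp only [add_zero, div_one, Real.rpow_one]
    exact hP1
  have hB0 : B 0 = 1 := by
    rw [hB_def]
    simp only [sub_zero, div_one, Real.rpow_one]
    exact hQ1
  have hA : HasDerivAt A (∑ k, -(P k * Real.log (P k))) 0 :=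
    HasDerivAt.fun_sum fun k _ => hasDerivAt_rpow_one_div_one_add (P k) (hP k)
  have hB : HasDerivAt B (∑ j, Q j * Real.log (Q j)) 0 :=
    HasDerivAt.fun_sum fun j _ => hasDerivAt_rpow_one_div_one_sub (Q j) (hQ j)
  have hlogA : HasDerivAt (fun t => Real.log (A t)) (∑ k, -(P k * Real.log (P k))) 0 := by
    have := hA.log (by rw [hA0]; norm_num)
    simpa [hA0] using this
  have hlogB : HasDerivAt (fun t => Real.log (B t)) (∑ j, Q j * Real.log (Q j)) 0 := by
    have := hB.log (by rw [hB0]; norm_num)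
    simpa [hB0] using this
  have hc1 : HasDerivAt (fun t : ℝ => (1 + t) / 2) (1 / 2 : ℝ) 0 := by
    simpa using ((hasDerivAt_id (0:ℝ)).const_add (1:ℝ)).div_const 2
  have hc2 : HasDerivAt (fun t : ℝ => (1 - t) / 2) (-(1 / 2) : ℝ) 0 := by
    have h := ((hasDerivAt_id' (0:ℝ)).const_sub (1:ℝ)).div_const 2
    rw [show (-(1 / 2) : ℝ) = -1 / 2 by ring]
    exact h
  have hG1 := hc1.mul hlogA
  have hG2 := hc2.mul hlogB
  have hG3 : HasDerivAt (fun t : ℝ => t * Real.log c) (Real.log c) 0 := by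
    simpa using (hasDerivAt_id (0:ℝ)).mul_const (Real.log c)
  set D : ℝ → ℝ := fun t => t * Real.log c + (1 + t) / 2 * Real.log (A t)
      - (1 - t) / 2 * Real.log (B t) with hD_def
  have hD := (hG3.add hG1).sub hG2
  set dval : ℝ := Real.log c
      + (1 / 2 * Real.log (A 0) + (1 + 0) / 2 * ∑ k, -(P k * Real.log (P k)))
      - (-(1 / 2) * Real.log (B 0) + (1 - 0) / 2 * ∑ j, Q j * Real.log (Q j)) with hdval_def
  have hD' : HasDerivAt D dval 0 := hD
  have hdval : dval = Real.log c + (∑ k, -(P k * Real.log (P k))) / 2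
      - (∑ j, Q j * Real.log (Q j)) / 2 := by
    rw [hdval_def, hA0, hB0]
    simp [Real.log_one]
    ring
  have hD0 : D 0 = 0 := by
    rw [hD_def]
    simp [hA0, hB0, Real.log_one]
  -- D is nonnegative on (0, 1), so the derivative at 0 is nonnegative
  have hslope : Filter.Tendsto (slope D 0) (nhdsWithin 0 (Set.Ioi 0)) (nhds dval) :=
    (hasDerivAt_iff_tendsto_slope.mp hD').mono_left
      (nhdsWithin_mono 0 (fun x hx => ne_of_gt hx))
  have hnonneg : 0 ≤ dval := by
    refine ge_of_tendsto hslope ?_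
    filter_upwards [Ioo_mem_nhdsGT_of_mem (Set.left_mem_Ico.mpr one_pos)] with t ht
    have hDt : 0 ≤ D t := by
      have := key t ht.1 ht.2
      rw [hD_def]
      dsimp only
      linarith [this]
    rw [slope_def_field, hD0]
    have : 0 < t := ht.1
    rw [sub_zero, sub_zero]
    positivity
  have hsum1 : (∑ k, -(P k * Real.log (P k))) = -∑ k, P k * Real.log (P k) := by
    rw [Finset.sum_neg_distrib]
  rw [hsum1] at hdval
  have hfinal : 0 ≤ Real.log c + (-∑ k, P k * Real.log (P k)) / 2
      - (∑ j, Q j * Real.log (Q j)) / 2 := hdval ▸ hnonneg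
  linarith [hfinal]
end MUaux

theorem maassen_uffink_entropic_uncertainty
    {H : Type*} [NormedAddCommGroup H] [InnerProductSpace ℂ H] [CompleteSpace H]
    (N : ℕ) [NeZero N] (e : OrthonormalBasis (Fin N) ℂ H)
    (U : H ≃ₗᵢ[ℂ] H) (c : ℝ)
    (hc : c = Finset.univ.sup' Finset.univ_nonempty
      (fun jk : Fin N × Fin N => ‖inner ℂ (e jk.1) (U (e jk.2))‖))
    (ψ : H) (hψ : ‖ψ‖ = 1) :
    (-∑ k, ‖inner ℂ (e k) (U ψ)‖ ^ 2 *
        Real.log (‖inner ℂ (e k) (U ψ)‖ ^ 2))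
      + (-∑ k, ‖inner ℂ (e k) ψ‖ ^ 2 *
        Real.log (‖inner ℂ (e k) ψ‖ ^ 2))
      ≥ -2 * Real.log c := by
  set a : Fin N → ℂ := fun k => inner ℂ (e k) ψ with ha_def
  set b : Fin N → ℂ := fun j => inner ℂ (e j) (U ψ) with hb_def
  set M : Fin N → Fin N → ℂ := fun j k => inner ℂ (e j) (U (e k)) with hM_def
  -- Parseval
  have hpars : ∀ v : H, ∑ j, norm (inner ℂ (e j) v : ℂ) ^ 2 = ‖v‖ ^ 2 := by
    intro v
    have h1 : ‖v‖ = Real.sqrt (∑ j, ‖e.repr v j‖ ^ 2) := by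
      rw [← e.repr.norm_map v, EuclideanSpace.norm_eq]
    rw [h1, Real.sq_sqrt (Finset.sum_nonneg fun j _ => sq_nonneg _)]
    refine Finset.sum_congr rfl fun j _ => ?_
    rw [e.repr_apply_apply]
  -- expansion of inner products
  have hexp : ∀ (x : Fin N → ℂ) (j : Fin N),
      (inner ℂ (e j) (U (∑ k, x k • e k)) : ℂ) = ∑ k, M j k * x k := by
    intro x j
    rw [map_sum]
    simp_rw [LinearIsometryEquiv.map_smul]
    rw [inner_sum]
    refine Finset.sum_congr rfl fun k _ => ?_
    rw [inner_smul_right, hM_def, mul_comm]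
  have hcoord : ∀ (x : Fin N → ℂ) (k : Fin N),
      (inner ℂ (e k) (∑ i, x i • e i) : ℂ) = x k := by
    intro x k
    rw [inner_sum]
    simp_rw [inner_smul_right, orthonormal_iff_ite.mp e.orthonormal]
    simp
  -- hypotheses of rt_bound
  have hiso : ∀ x : Fin N → ℂ,
      ∑ j, norm (∑ k, M j k * x k) ^ 2 = ∑ k, norm (x k) ^ 2 := by
    intro x
    have h1 : ∀ j, (∑ k, M j k * x k) = inner ℂ (e j) (U (∑ k, x k • e k)) :=
      fun j => (hexp x j).symm
    simp_rw [h1]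
    rw [hpars (U (∑ k, x k • e k)), U.norm_map, ← hpars (∑ k, x k • e k)]
    refine Finset.sum_congr rfl fun k _ => ?_
    rw [hcoord x k]
  have hb : ∀ j, b j = ∑ k, M j k * a k := by
    intro j
    rw [hb_def]
    dsimp only
    conv_lhs => rw [← e.sum_repr ψ]
    have : ∀ i, e.repr ψ i = a i := fun i => e.repr_apply_apply ψ i
    simp_rw [this]
    exact hexp a j
  have ha1 : ∑ k, norm (a k) ^ 2 = 1 := by
    rw [ha_def]
    dsimp only
    rw [hpars ψ, hψ]
    norm_num
  have hM : ∀ j k, norm (M j k) ≤ c := by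
    intro j k
    rw [hc]
    exact Finset.le_sup' (fun jk : Fin N × Fin N =>
      norm (inner ℂ (e jk.1) (U (e jk.2)))) (Finset.mem_univ (j, k))
  have hcpos : 0 < c := by
    have hNpos : 0 < N := Nat.pos_of_ne_zero (NeZero.ne N)
    set k0 : Fin N := ⟨0, hNpos⟩
    have h1 : ∑ j, norm (inner ℂ (e j) (U (e k0)) : ℂ) ^ 2 = 1 := by
      rw [hpars (U (e k0)), U.norm_map]
      rw [e.orthonormal.1 k0]
      norm_num
    have h2 : ∃ j, (inner ℂ (e j) (U (e k0)) : ℂ) ≠ 0 := by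
      by_contra hcon
      push_neg at hcon
      simp [hcon] at h1
    obtain ⟨j, hj⟩ := h2
    have h3 : 0 < norm (inner ℂ (e j) (U (e k0)) : ℂ) := by
      simpa [norm_pos_iff] using hj
    exact lt_of_lt_of_le h3 (hM j k0)
  have key : ∀ t : ℝ, 0 < t → t < 1 →
      (1 - t) / 2 * Real.log (∑ j, (norm (b j) ^ 2 : ℝ) ^ (1 / (1 - t)))
        ≤ t * Real.log c
          + (1 + t) / 2 * Real.log (∑ k, (norm (a k) ^ 2 : ℝ) ^ (1 / (1 + t))) :=
    fun t ht0 ht1 => rt_bound a b M c hcpos hM hiso hb ha1 ht0 ht1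
  have hmain := deriv_step (fun k => norm (a k) ^ 2) (fun j => norm (b j) ^ 2)
    c hcpos (fun k => sq_nonneg _) (fun j => sq_nonneg _) ha1
    (by
      have : ∑ j, norm (b j) ^ 2 = 1 := by
        simp_rw [hb]
        rw [hiso a, ha1]
      exact this)
    key
  exact hmain
end
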